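/- Let (A,F,D) be a Płonka Σ-algebra. For every n-ary σ and all families (x_j)_{j<n}, (y_j)_{j<n}: D(σ^A((x_j)_{j<n}), σ^A((y_j)_{j<n})) = σ^A((D(x_j, y_j))_{j<n}); equivalently, D: A × A → A is a Σ-homomorphism from A² to A. -/

import Mathlib

/-- Right iterates of a binary operation: `DR D n x` is the `(n+1)`-fold
iterate `D (x 0) (D (x 1) (... (x n)))`. -/
def DR {A : Type*} (D : A → A → A) : (n : ℕ) → (Fin (n + 1) → A) → A
  | 0, x => x 0
  | n + 1, x => D (x 0) (DR D n (fun k => x k.succ))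

section Aux

variable {A : Type*} (D : A → A → A)

/-- Fold of `D` over a list with head `a`. -/
def fl (a : A) (L : List A) : A := L.foldl D a

lemma fl_nil (a : A) : fl D a [] = a := rfl

lemma fl_cons (a b : A) (L : List A) : fl D a (b :: L) = fl D (D a b) L := rfl

lemma fl_append (a : A) (L M : List A) :
    fl D a (L ++ M) = fl D (fl D a L) M := List.foldl_append ..

lemma key_swap (h2 : ∀ x y z, D x (D y z) = D (D x y) z)
    (h3 : ∀ x y z, D x (D y z) = D x (D z y)) (a b c : A) :
    D (D a b) c = D (D a c) b := by
  rw [← h2, h3, h2]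

lemma fl_perm (h2 : ∀ x y z, D x (D y z) = D (D x y) z)
    (h3 : ∀ x y z, D x (D y z) = D x (D z y))
    {L L' : List A} (p : L.Perm L') : ∀ a, fl D a L = fl D a L' := by
  induction p with
  | nil => intro a; rfl
  | cons x p ih => intro a; rw [fl_cons, fl_cons, ih]
  | swap x y l => intro a; rw [fl_cons, fl_cons, fl_cons, fl_cons, key_swap D h2 h3]
  | trans p q ih1 ih2 => intro a; rw [ih1, ih2]

lemma mem_absorb (h1 : ∀ x, D x x = x)
    (h2 : ∀ x y z, D x (D y z) = D (D x y) z)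
    (h3 : ∀ x y z, D x (D y z) = D x (D z y))
    {a b : A} {L : List A} (hb : b ∈ a :: L) :
    fl D a (b :: L) = fl D a L := by
  classical
  rcases List.mem_cons.mp hb with h | h
  · subst h; rw [fl_cons, h1]
  · have p : L.Perm (b :: L.erase b) := List.perm_cons_erase h
    rw [fl_perm D h2 h3 (p.cons b), fl_cons, fl_cons, ← h2, h1, ← fl_cons,
      ← fl_perm D h2 h3 p]

lemma absorb_sub (h1 : ∀ x, D x x = x)
    (h2 : ∀ x y z, D x (D y z) = D (D x y) z)
    (h3 : ∀ x y z, D x (D y z) = D x (D z y))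
    (a : A) (L : List A) {M : List A}
    (hs : ∀ b ∈ L, b ∈ a :: M) : fl D a (L ++ M) = fl D a M := by
  induction L with
  | nil => rfl
  | cons b L ih =>
    have hb : b ∈ a :: (L ++ M) := by
      rcases List.mem_cons.mp (hs b (by simp)) with h | h
      · simp [h]
      · simp [h]
    have h' : fl D a (b :: (L ++ M)) = fl D a (L ++ M) :=
      mem_absorb D h1 h2 h3 hb
    rw [List.cons_append, h', ih (fun b hb => hs b (by simp [hb]))]

lemma fl_set_eq (h1 : ∀ x, D x x = x)
    (h2 : ∀ x y z, D x (D y z) = D (D x y) z)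
    (h3 : ∀ x y z, D x (D y z) = D x (D z y))
    (a : A) {L M : List A}
    (hLM : ∀ b ∈ L, b ∈ a :: M) (hML : ∀ b ∈ M, b ∈ a :: L) :
    fl D a L = fl D a M := by
  have e1 : fl D a (M ++ L) = fl D a L := absorb_sub D h1 h2 h3 a M hML
  have e2 : fl D a (L ++ M) = fl D a M := absorb_sub D h1 h2 h3 a L hLM
  have e3 : fl D a (M ++ L) = fl D a (L ++ M) :=
    fl_perm D h2 h3 List.perm_append_comm a
  rw [← e1, e3, e2]

lemma fl_mul (h2 : ∀ x y z, D x (D y z) = D (D x y) z)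
    (a b : A) (L : List A) : D a (fl D b L) = fl D (D a b) L := by
  induction L generalizing a b with
  | nil => rfl
  | cons c L ih => rw [fl_cons, fl_cons, ih, h2]

lemma flD (h2 : ∀ x y z, D x (D y z) = D (D x y) z) :
    ∀ (n : ℕ) (x : Fin (n + 1) → A) (a : A),
    D a (DR D n x) = fl D a (List.ofFn x)
  | 0, x, a => by simp [DR, fl, List.ofFn_succ]
  | n + 1, x, a => by
    show D a (D (x 0) (DR D n fun k => x k.succ)) = _
    rw [h2, flD h2 n (fun k => x k.succ) (D a (x 0)), ← fl_cons]
    congr 1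
    exact List.ofFn_succ.symm

/-- Interleaved list of two families. -/
def itl : (n : ℕ) → (Fin (n + 1) → A) → (Fin (n + 1) → A) → List A
  | 0, x, y => [x 0, y 0]
  | n + 1, x, y => x 0 :: y 0 :: itl n (fun k => x k.succ) (fun k => y k.succ)

lemma itl_mem : ∀ (n : ℕ) (x y : Fin (n + 1) → A) (b : A),
    b ∈ itl n x y ↔ (∃ j, b = x j) ∨ (∃ j, b = y j)
  | 0, x, y, b => by
    simp only [itl, List.mem_cons, List.not_mem_nil, or_false]
    constructor
    · rintro (h | h)
      · exact Or.inl ⟨0, h⟩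
      · exact Or.inr ⟨0, h⟩
    · rintro (⟨j, h⟩ | ⟨j, h⟩)
      · exact Or.inl (by rw [h, Fin.fin_one_eq_zero j])
      · exact Or.inr (by rw [h, Fin.fin_one_eq_zero j])
  | n + 1, x, y, b => by
    simp only [itl, List.mem_cons, itl_mem n]
    constructor
    · rintro (h | h | ⟨j, h⟩ | ⟨j, h⟩)
      · exact Or.inl ⟨0, h⟩
      · exact Or.inr ⟨0, h⟩
      · exact Or.inl ⟨j.succ, h⟩
      · exact Or.inr ⟨j.succ, h⟩
    · rintro (⟨j, h⟩ | ⟨j, h⟩)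
      · rcases Fin.eq_zero_or_eq_succ j with h0 | ⟨k, hk⟩
        · exact Or.inl (by rw [h, h0])
        · exact Or.inr (Or.inr (Or.inl ⟨k, by rw [h, hk]⟩))
      · rcases Fin.eq_zero_or_eq_succ j with h0 | ⟨k, hk⟩
        · exact Or.inr (Or.inl (by rw [h, h0]))
        · exact Or.inr (Or.inr (Or.inr ⟨k, by rw [h, hk]⟩))

lemma fl_split (h2 : ∀ x y z, D x (D y z) = D (D x y) z) :
    ∀ (n : ℕ) (x y : Fin (n + 1) → A) (a : A),
    fl D a (List.ofFn fun j => D (x j) (y j)) = fl D a (itl n x y)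
  | 0, x, y, a => by
    simp only [List.ofFn_succ, List.ofFn_zero, itl, fl_cons, fl_nil]
    exact h2 a (x 0) (y 0)
  | n + 1, x, y, a => by
    rw [List.ofFn_succ, fl_cons]
    show _ = fl D a (x 0 :: y 0 :: itl n (fun k => x k.succ) (fun k => y k.succ))
    rw [fl_cons, fl_cons, ← h2]
    exact fl_split h2 n (fun k => x k.succ) (fun k => y k.succ) _

end Aux

/-- In a Płonka Σ-algebra, the Płonka operator `D` is a Σ-homomorphism from
`A²` to `A`. -/
theorem plonka_operator_hom {A : Type*} (Sig : ℕ → Type*)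
    (F : ∀ n : ℕ, Sig n → (Fin (n + 1) → A) → A)
    (D : A → A → A)
    (h1 : ∀ x, D x x = x)
    (h2 : ∀ x y z, D x (D y z) = D (D x y) z)
    (h3 : ∀ x y z, D x (D y z) = D x (D z y))
    (h4 : ∀ (n : ℕ) (σ : Sig n) (x : Fin (n + 1) → A) (y : A),
      D (F n σ x) y = F n σ (fun j => D (x j) y))
    (h5 : ∀ (n : ℕ) (σ : Sig n) (x : Fin (n + 1) → A) (y : A),
      D y (F n σ x) = D y (DR D n x)) :
    ∀ (n : ℕ) (σ : Sig n) (x y : Fin (n + 1) → A),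
      D (F n σ x) (F n σ y) = F n σ (fun j => D (x j) (y j)) := by
  intro n σ x y
  set z : Fin (n + 1) → A := fun j => D (x j) (y j) with hz
  set X := DR D n x with hX
  set Y := DR D n y with hY
  set Z := DR D n z with hZ
  -- LHS = F σ (fun j => D (x j) (D X Y))
  have lhs : D (F n σ x) (F n σ y) = F n σ (fun j => D (x j) (D X Y)) := by
    have e1 : F n σ x = D (F n σ x) X := by
      rw [← h5 n σ x (F n σ x), h1]
    calc D (F n σ x) (F n σ y) = D (D (F n σ x) X) (F n σ y) := by rw [← e1]
      _ = D (F n σ x) (D X (F n σ y)) := by rw [h2]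
      _ = D (F n σ x) (D X Y) := by rw [h5 n σ y X]
      _ = F n σ (fun j => D (x j) (D X Y)) := h4 n σ x _
  -- RHS = F σ (fun j => D (z j) Z)
  have rhs : F n σ z = F n σ (fun j => D (z j) Z) := by
    calc F n σ z = D (F n σ z) (F n σ z) := (h1 _).symm
      _ = D (F n σ z) Z := h5 n σ z _
      _ = F n σ (fun j => D (z j) Z) := h4 n σ z _
  rw [lhs, rhs]
  congr 1
  funext j
  -- pointwise: D (x j) (D X Y) = D (z j) Z
  have left : D (x j) (D X Y) = fl D (x j) (List.ofFn x ++ List.ofFn y) := by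
    rw [h2, hX, flD D h2 n x (x j), hY, flD D h2 n y _, fl_append]
  have right : D (z j) Z = fl D (x j) (y j :: itl n x y) := by
    rw [hz, hZ, flD D h2 n z (D (x j) (y j)), ← fl_cons,
      fl_cons D (x j) (y j), fl_split D h2 n x y, ← fl_cons]
  rw [left, right]
  refine (fl_set_eq D h1 h2 h3 (x j) ?_ ?_).symm
  · intro b hb
    rcases List.mem_cons.mp hb with h | h
    · exact List.mem_cons_of_mem _ (List.mem_append.mpr (Or.inr (List.mem_ofFn.mpr ⟨j, h.symm⟩)))
    · rcases (itl_mem n x y b).mp h with ⟨k, hk⟩ | ⟨k, hk⟩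
      · exact List.mem_cons_of_mem _ (List.mem_append.mpr (Or.inl (List.mem_ofFn.mpr ⟨k, hk.symm⟩)))
      · exact List.mem_cons_of_mem _ (List.mem_append.mpr (Or.inr (List.mem_ofFn.mpr ⟨k, hk.symm⟩)))
  · intro b hb
    rcases List.mem_append.mp hb with h | h
    · obtain ⟨k, hk⟩ := List.mem_ofFn.mp h
      exact List.mem_cons_of_mem _ (List.mem_cons_of_mem _
        ((itl_mem n x y b).mpr (Or.inl ⟨k, hk.symm⟩)))
    · obtain ⟨k, hk⟩ := List.mem_ofFn.mp h
      exact List.mem_cons_of_mem _ (List.mem_cons_of_mem _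
        ((itl_mem n x y b).mpr (Or.inr ⟨k, hk.symm⟩)))
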